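/- Fix an integer K ≥ 2, an index k : Fin K, and ᾱ ∈ [0,1). Let μ_k = N(ᾱ e_k, (1−ᾱ²) I_K) and let A : ℝ^K → Fin K be the least-index argmax map. Then for every function g : Fin K → ℝ, ∫ g(A(w)) dμ_k(w) = 𝒯(ᾱ)·g(k) + ((1 − 𝒯(ᾱ))/K)·∑_{j : Fin K} g(j). Hence any expectation under the Uniform-state discrete marginal Cat(𝒯(ᾱ)·e_k + (1−𝒯(ᾱ))·𝟙/K) can be computed as an expectation over Gaussian latents composed with argmax. -/

import Mathlib

open MeasureTheory ProbabilityTheory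
open scoped NNReal ENNReal

/-- The standard normal density `φ(z) = exp(-z²/2)/√(2π)`. -/
noncomputable def stdGaussianPDF (z : ℝ) : ℝ :=
  Real.exp (-z ^ 2 / 2) / Real.sqrt (2 * Real.pi)

/-- The standard normal cumulative distribution function `Φ(z) = ∫_{-∞}^z φ(u) du`. -/
noncomputable def stdGaussianCDF (z : ℝ) : ℝ :=
  ∫ u in Set.Iic z, stdGaussianPDF u

/-- The diffusion transformation operator
`𝒯(ᾱ) = (K/(K-1)) (∫_ℝ φ(z - ᾱ/√(1-ᾱ²)) Φ(z)^{K-1} dz - 1/K)`. -/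
noncomputable def diffTransform (K : ℕ) (α : ℝ) : ℝ :=
  ((K : ℝ) / ((K : ℝ) - 1)) *
    ((∫ z : ℝ, stdGaussianPDF (z - α / Real.sqrt (1 - α ^ 2))
        * stdGaussianCDF z ^ (K - 1)) - 1 / (K : ℝ))

/-- The least index attaining the maximum of `w : Fin K → ℝ`. -/
noncomputable def argmaxIdx {K : ℕ} [NeZero K] (w : Fin K → ℝ) : Fin K :=
  (Finset.univ.filter fun i => ∀ j, w j ≤ w i).min' (by
    obtain ⟨i, -, hi⟩ :=
      Finset.exists_max_image (Finset.univ : Finset (Fin K)) w Finset.univ_nonempty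
    exact ⟨i, Finset.mem_filter.mpr ⟨Finset.mem_univ i, fun j => hi j (Finset.mem_univ j)⟩⟩)

/-! ### Auxiliary lemmas -/

lemma stdPDF_eq : stdGaussianPDF = gaussianPDFReal 0 1 := by
  funext x
  simp [stdGaussianPDF, gaussianPDFReal, div_eq_inv_mul, mul_comm]

lemma stdCDF_mono : Monotone stdGaussianCDF := by
  intro a b hab
  unfold stdGaussianCDF
  rw [stdPDF_eq]
  exact setIntegral_mono_set (integrable_gaussianPDFReal 0 1).restrict
    (Filter.Eventually.of_forall fun x => gaussianPDFReal_nonneg 0 1 x)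
    (HasSubset.Subset.eventuallyLE (Set.Iic_subset_Iic.mpr hab))

lemma stdCDF_meas : Measurable stdGaussianCDF := stdCDF_mono.measurable

lemma stdCDF_nonneg (z : ℝ) : 0 ≤ stdGaussianCDF z := by
  rw [stdGaussianCDF, stdPDF_eq]
  exact setIntegral_nonneg measurableSet_Iic fun x _ => gaussianPDFReal_nonneg 0 1 x

lemma stdCDF_le_one (z : ℝ) : stdGaussianCDF z ≤ 1 := by
  rw [stdGaussianCDF, stdPDF_eq, ← integral_gaussianPDFReal_eq_one 0 one_ne_zero]
  exact setIntegral_le_integral (integrable_gaussianPDFReal 0 1)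
    (Filter.Eventually.of_forall fun x => gaussianPDFReal_nonneg 0 1 x)

lemma gaussianReal_Iio_std (x : ℝ) :
    gaussianReal 0 1 (Set.Iio x) = ENNReal.ofReal (stdGaussianCDF x) := by
  rw [gaussianReal_apply_eq_integral 0 one_ne_zero, stdGaussianCDF, stdPDF_eq]
  congr 1
  exact setIntegral_congr_set Iio_ae_eq_Iic

lemma gaussianReal_Iio_scaled {σ : ℝ} (hσ : 0 < σ) (t : ℝ) :
    gaussianReal 0 (⟨σ ^ 2, sq_nonneg σ⟩ : ℝ≥0) (Set.Iio t)
      = ENNReal.ofReal (stdGaussianCDF (t / σ)) := by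
  have hmap : (gaussianReal 0 1).map (σ * ·)
      = gaussianReal 0 (⟨σ ^ 2, sq_nonneg σ⟩ : ℝ≥0) := by
    have := gaussianReal_map_const_mul (μ := 0) (v := 1) σ; simp only [mul_zero, mul_one] at this; exact this
  rw [← hmap, Measure.map_apply (measurable_const_mul σ) measurableSet_Iio]
  have : (σ * ·) ⁻¹' Set.Iio t = Set.Iio (t / σ) := by
    ext z; simp [Set.mem_Iio, lt_div_iff₀ hσ, mul_comm]
  rw [this, gaussianReal_Iio_std]

lemma argmaxIdx_eq_of_lt {K : ℕ} [NeZero K] {w : Fin K → ℝ} {j : Fin K}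
    (h : ∀ i, i ≠ j → w i < w j) : argmaxIdx w = j := by
  have hset : (Finset.univ.filter fun i => ∀ j', w j' ≤ w i) = {j} := by
    apply Finset.eq_singleton_iff_unique_mem.mpr
    constructor
    · refine Finset.mem_filter.mpr ⟨Finset.mem_univ j, fun i => ?_⟩
      rcases eq_or_ne i j with rfl | hij
      · exact le_rfl
      · exact (h i hij).le
    · intro i hi
      by_contra hij
      exact absurd (Finset.mem_filter.mp hi).2 (fun hall => absurd (hall j) (not_le.mpr (h i hij)))
  simp only [argmaxIdx]
  simp_rw [hset]
  exact Finset.min'_singleton j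

lemma le_argmaxIdx {K : ℕ} [NeZero K] (w : Fin K → ℝ) (i : Fin K) :
    w i ≤ w (argmaxIdx w) := by
  have := Finset.min'_mem (Finset.univ.filter fun i => ∀ j, w j ≤ w i) (by
    obtain ⟨i, -, hi⟩ :=
      Finset.exists_max_image (Finset.univ : Finset (Fin K)) w Finset.univ_nonempty
    exact ⟨i, Finset.mem_filter.mpr ⟨Finset.mem_univ i, fun j => hi j (Finset.mem_univ j)⟩⟩)
  exact (Finset.mem_filter.mp this).2 i

lemma argmaxIdx_eq_iff {K : ℕ} [NeZero K] {w : Fin K → ℝ}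
    (hw : ∀ i i', i ≠ i' → w i ≠ w i') (j : Fin K) :
    argmaxIdx w = j ↔ ∀ i, i ≠ j → w i < w j := by
  refine ⟨fun h i hij => ?_, argmaxIdx_eq_of_lt⟩
  subst h
  exact lt_of_le_of_ne (le_argmaxIdx w i) (hw i _ hij)

lemma measurableSet_argmax {K : ℕ} [NeZero K] (j : Fin K) :
    MeasurableSet {w : Fin K → ℝ | argmaxIdx w = j} := by
  have hchar : {w : Fin K → ℝ | argmaxIdx w = j}
      = {w : Fin K → ℝ | ∀ i, w i ≤ w j} ∩
        ⋂ i, {w : Fin K → ℝ | (∀ i', w i' ≤ w i) → j ≤ i} := by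
    ext w
    simp only [Set.mem_setOf_eq, Set.mem_inter_iff, Set.mem_iInter]
    constructor
    · rintro rfl
      refine ⟨le_argmaxIdx w, fun i hi => Finset.min'_le _ i ?_⟩
      exact Finset.mem_filter.mpr ⟨Finset.mem_univ i, hi⟩
    · rintro ⟨h1, h2⟩
      refine le_antisymm ?_ ?_
      · exact Finset.min'_le _ j (Finset.mem_filter.mpr ⟨Finset.mem_univ j, h1⟩)
      · apply Finset.le_min'
        intro i hi
        exact h2 i (Finset.mem_filter.mp hi).2
  rw [hchar]
  refine MeasurableSet.inter ?_ (MeasurableSet.iInter fun i => ?_)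
  · rw [show {w : Fin K → ℝ | ∀ i, w i ≤ w j} = ⋂ i, {w | w i ≤ w j} by ext; simp]
    exact MeasurableSet.iInter fun i =>
      measurableSet_le (measurable_pi_apply i) (measurable_pi_apply j)
  · by_cases h : j ≤ i
    · rw [show {w : Fin K → ℝ | (∀ i', w i' ≤ w i) → j ≤ i} = Set.univ by ext; simp [h]]
      exact MeasurableSet.univ
    · rw [show {w : Fin K → ℝ | (∀ i', w i' ≤ w i) → j ≤ i}
          = (⋂ i', {w : Fin K → ℝ | w i' ≤ w i})ᶜ by ext; simp [h]]
      exact (MeasurableSet.iInter fun i' =>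
        measurableSet_le (measurable_pi_apply i') (measurable_pi_apply i)).compl

lemma measurableSet_B {K : ℕ} (j' : Fin K) :
    MeasurableSet {w : Fin K → ℝ | ∀ i, i ≠ j' → w i < w j'} := by
  rw [show {w : Fin K → ℝ | ∀ i, i ≠ j' → w i < w j'}
      = ⋂ i, {w | i ≠ j' → w i < w j'} by ext; simp]
  refine MeasurableSet.iInter fun i => ?_
  by_cases h : i = j'
  · rw [show {w : Fin K → ℝ | i ≠ j' → w i < w j'} = Set.univ by ext; simp [h]]
    exact MeasurableSet.univ
  · rw [show {w : Fin K → ℝ | i ≠ j' → w i < w j'} = {w | w i < w j'} by ext; simp [h]]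
    exact measurableSet_lt (measurable_pi_apply i) (measurable_pi_apply j')

lemma ties_null {n : ℕ} (μm : Fin (n + 1) → Measure ℝ)
    [∀ i, IsProbabilityMeasure (μm i)] (hac : ∀ i, μm i ≪ volume) :
    ∀ᵐ w ∂Measure.pi μm, ∀ i i', i ≠ i' → w i ≠ w i' := by
  rw [ae_all_iff]
  intro i
  rw [ae_all_iff]
  intro i'
  rcases eq_or_ne i i' with rfl | hii
  · filter_upwards with w h; exact absurd rfl h
  · have hnull : Measure.pi μm {w : Fin (n+1) → ℝ | w i = w i'} = 0 := by
      set T := MeasurableEquiv.piFinSuccAbove (fun _ : Fin (n+1) => ℝ) i with hT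
      have hTm := measurePreserving_piFinSuccAbove (fun j => μm j) i
      obtain ⟨r, hr⟩ := Fin.exists_succAbove_eq hii.symm
      have hs : MeasurableSet {p : ℝ × (Fin n → ℝ) | p.1 = p.2 r} :=
        measurableSet_eq_fun measurable_fst ((measurable_pi_apply r).comp measurable_snd)
      have hpre : {w : Fin (n+1) → ℝ | w i = w i'}
          = T ⁻¹' {p : ℝ × (Fin n → ℝ) | p.1 = p.2 r} := by
        ext w
        simp only [Set.mem_setOf_eq, Set.mem_preimage, hT, MeasurableEquiv.piFinSuccAbove_apply, Fin.insertNthEquiv_symm_apply]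
        simp [Fin.removeNth, hr]
      rw [hpre, hTm.measure_preimage hs.nullMeasurableSet,
        Measure.prod_apply hs]
      have : ∀ t : ℝ, (Measure.pi fun j => μm (i.succAbove j))
          (Prod.mk t ⁻¹' {p : ℝ × (Fin n → ℝ) | p.1 = p.2 r}) = 0 := by
        intro t
        have h2 : (Prod.mk t ⁻¹' {p : ℝ × (Fin n → ℝ) | p.1 = p.2 r})
            = Function.eval r ⁻¹' ({t} : Set ℝ) := by
          ext y; simp [eq_comm, Function.eval]
        rw [h2]
        exact Measure.pi_eval_preimage_null _ (hac _ (measure_singleton t))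
      simp only [Set.preimage_setOf_eq] at this ⊢
      simp [this]
    rw [ae_iff]
    refine measure_mono_null ?_ hnull
    intro w hw
    simp only [Set.mem_setOf_eq] at hw ⊢
    push_neg at hw
    exact hw.2

lemma measure_lt_pivot {n : ℕ} (μm : Fin (n + 1) → Measure ℝ)
    [∀ i, IsProbabilityMeasure (μm i)] (k : Fin (n + 1)) :
    Measure.pi μm {w | ∀ i, i ≠ k → w i < w k}
      = ∫⁻ t, ∏ j : Fin n, μm (k.succAbove j) (Set.Iio t) ∂(μm k) := by
  set T := MeasurableEquiv.piFinSuccAbove (fun _ : Fin (n+1) => ℝ) k with hT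
  have hTm := measurePreserving_piFinSuccAbove (fun j => μm j) k
  have hs : MeasurableSet {p : ℝ × (Fin n → ℝ) | ∀ j, p.2 j < p.1} := by
    rw [show {p : ℝ × (Fin n → ℝ) | ∀ j, p.2 j < p.1} = ⋂ j, {p | p.2 j < p.1} by ext; simp]
    exact MeasurableSet.iInter fun j =>
      measurableSet_lt (measurable_snd.eval) measurable_fst
  have hpre : {w : Fin (n+1) → ℝ | ∀ i, i ≠ k → w i < w k}
      = T ⁻¹' {p : ℝ × (Fin n → ℝ) | ∀ j, p.2 j < p.1} := by
    ext w
    simp only [Set.mem_setOf_eq, Set.mem_preimage, hT, MeasurableEquiv.piFinSuccAbove_apply, Fin.insertNthEquiv_symm_apply]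
    constructor
    · intro h j
      simpa [Fin.removeNth] using h (k.succAbove j) (k.succAbove_ne j)
    · intro h i hik
      obtain ⟨j, rfl⟩ := Fin.exists_succAbove_eq hik
      simpa [Fin.removeNth] using h j
  rw [hpre, hTm.measure_preimage hs.nullMeasurableSet, Measure.prod_apply hs]
  congr 1
  funext t
  have : (Prod.mk t ⁻¹' {p : ℝ × (Fin n → ℝ) | ∀ j, p.2 j < p.1})
      = Set.pi Set.univ fun _ => Set.Iio t := by
    ext y; simp
  rw [this, Measure.pi_pi]

lemma measure_B_swap {n : ℕ} (μm : Fin (n + 1) → Measure ℝ)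
    [∀ i, IsProbabilityMeasure (μm i)] (j j' : Fin (n + 1))
    (hswap : ∀ i, μm (Equiv.swap j j' i) = μm i) :
    Measure.pi μm {w | ∀ i, i ≠ j → w i < w j}
      = Measure.pi μm {w | ∀ i, i ≠ j' → w i < w j'} := by
  set f := Equiv.swap j j' with hf
  set T := MeasurableEquiv.piCongrLeft (fun _ : Fin (n+1) => ℝ) f with hT
  have hTm : MeasurePreserving T (Measure.pi fun i => μm (f i)) (Measure.pi μm) :=
    measurePreserving_piCongrLeft (fun i => μm i) f
  have hpi : (Measure.pi fun i => μm (f i)) = Measure.pi μm := by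
    congr 1
    funext i
    exact hswap i
  rw [hpi] at hTm
  have hmeas : MeasurableSet {w : Fin (n+1) → ℝ | ∀ i, i ≠ j' → w i < w j'} :=
    measurableSet_B j'
  have hpre : T ⁻¹' {w | ∀ i, i ≠ j' → w i < w j'} = {w | ∀ i, i ≠ j → w i < w j} := by
    ext x
    simp only [Set.mem_preimage, Set.mem_setOf_eq]
    have happ : ∀ i, T x (f i) = x i := fun i =>
      MeasurableEquiv.piCongrLeft_apply_apply (β := fun _ : Fin (n+1) => ℝ) f x i
    constructor
    · intro h i hij
      have := h (f i) (by
        rw [show j' = f j from (Equiv.swap_apply_left j j').symm]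
        exact fun hc => hij (f.injective hc))
      rwa [happ, show j' = f j from (Equiv.swap_apply_left j j').symm, happ] at this
    · intro h i hij
      obtain ⟨i₀, rfl⟩ := f.surjective i
      rw [happ, show j' = f j from (Equiv.swap_apply_left j j').symm, happ]
      exact h i₀ fun h0 => hij (by rw [h0]; exact Equiv.swap_apply_left j j')
  calc Measure.pi μm {w | ∀ i, i ≠ j → w i < w j}
      = Measure.pi μm (T ⁻¹' {w | ∀ i, i ≠ j' → w i < w j'}) := by rw [hpre]
    _ = Measure.pi μm {w | ∀ i, i ≠ j' → w i < w j'} :=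
        hTm.measure_preimage hmeas.nullMeasurableSet

lemma key_integral {α : ℝ} (hσ : 0 < Real.sqrt (1 - α ^ 2))
    (hσ2 : Real.sqrt (1 - α ^ 2) ^ 2 = 1 - α ^ 2) (n : ℕ) :
    ∫⁻ t, ENNReal.ofReal (stdGaussianCDF (t / Real.sqrt (1 - α ^ 2)) ^ n)
        ∂(gaussianReal α (Real.toNNReal (1 - α ^ 2)))
      = ENNReal.ofReal
          (∫ z : ℝ, stdGaussianPDF (z - α / Real.sqrt (1 - α ^ 2)) * stdGaussianCDF z ^ n) := by
  set σ : ℝ := Real.sqrt (1 - α ^ 2) with hσdef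
  set m : ℝ := α / σ with hm
  have hv : Real.toNNReal (1 - α ^ 2) = (⟨σ ^ 2, sq_nonneg σ⟩ : ℝ≥0) := by
    ext
    simp [Real.coe_toNNReal _ (by nlinarith : (0:ℝ) ≤ 1 - α ^ 2), hσ2]; rfl
  have hmap : gaussianReal α (Real.toNNReal (1 - α ^ 2))
      = (gaussianReal 0 1).map (fun z => σ * z + α) := by
    have h1 : (gaussianReal 0 1).map (σ * ·) = gaussianReal 0 (⟨σ ^ 2, sq_nonneg σ⟩ : ℝ≥0) := by
      have := gaussianReal_map_const_mul (μ := 0) (v := 1) σ; simp only [mul_zero, mul_one] at this; exact this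
    have h2 : ((gaussianReal 0 1).map (σ * ·)).map (· + α)
        = gaussianReal α (⟨σ ^ 2, sq_nonneg σ⟩ : ℝ≥0) := by
      rw [h1]
      simpa using gaussianReal_map_add_const (μ := 0) (v := ⟨σ ^ 2, sq_nonneg σ⟩) α
    rw [hv, ← h2, Measure.map_map (measurable_add_const α) (measurable_const_mul σ)]
    rfl
  have hfmeas : Measurable fun t => ENNReal.ofReal (stdGaussianCDF (t / σ) ^ n) :=
    ((stdCDF_meas.comp (measurable_id.div_const σ)).pow_const n).ennreal_ofReal
  rw [hmap, lintegral_map hfmeas ((measurable_const_mul σ).add_const α)]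
  have harg : ∀ z : ℝ, (σ * z + α) / σ = z + m := by
    intro z
    rw [hm]
    field_simp
  simp_rw [harg]
  have hgm : Measurable fun z : ℝ => ENNReal.ofReal (stdGaussianCDF (z + m) ^ n) :=
    ((stdCDF_meas.comp (measurable_add_const m)).pow_const n).ennreal_ofReal
  rw [gaussianReal_of_var_ne_zero 0 one_ne_zero,
    lintegral_withDensity_eq_lintegral_mul _ (measurable_gaussianPDF 0 1) hgm]
  have hpt : ∀ z : ℝ, gaussianPDF 0 1 z * ENNReal.ofReal (stdGaussianCDF (z + m) ^ n)
      = ENNReal.ofReal (stdGaussianCDF (z + m) ^ n * stdGaussianPDF z) := by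
    intro z
    rw [gaussianPDF, ← ENNReal.ofReal_mul (gaussianPDFReal_nonneg 0 1 z),
      mul_comm (gaussianPDFReal 0 1 z), stdPDF_eq]
  simp only [Pi.mul_apply]
  simp_rw [hpt]
  have hstdint : Integrable stdGaussianPDF volume := by
    rw [stdPDF_eq]; exact integrable_gaussianPDFReal 0 1
  have hint : Integrable (fun z => stdGaussianCDF (z + m) ^ n * stdGaussianPDF z) volume := by
    refine Integrable.bdd_mul (c := 1) hstdint ?_ ?_
    · exact ((stdCDF_meas.comp (measurable_add_const m)).pow_const n).aestronglyMeasurable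
    · filter_upwards with z
      rw [Real.norm_eq_abs, abs_of_nonneg (pow_nonneg (stdCDF_nonneg _) n)]
      exact pow_le_one₀ (stdCDF_nonneg _) (stdCDF_le_one _)
  rw [← ofReal_integral_eq_lintegral_ofReal hint (Filter.Eventually.of_forall fun z =>
    mul_nonneg (pow_nonneg (stdCDF_nonneg _) n)
      (by rw [stdPDF_eq]; exact gaussianPDFReal_nonneg 0 1 z))]
  congr 1
  calc ∫ z, stdGaussianCDF (z + m) ^ n * stdGaussianPDF z
      = ∫ z, stdGaussianCDF (z + m) ^ n * stdGaussianPDF (z + m - m) := by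
        simp [add_sub_cancel_right]
    _ = ∫ z, stdGaussianCDF z ^ n * stdGaussianPDF (z - m) :=
        integral_add_right_eq_self (fun z => stdGaussianCDF z ^ n * stdGaussianPDF (z - m)) m
    _ = ∫ z, stdGaussianPDF (z - m) * stdGaussianCDF z ^ n := by
        simp [mul_comm]

/-- Expectations under the Uniform-state categorical marginal
`Cat(𝒯(ᾱ) e_k + (1-𝒯(ᾱ)) 𝟙/K)` can be computed as Gaussian expectations composed with
argmax: `∫ g(A(w)) dN(ᾱ e_k, (1-ᾱ²) I_K)(w) = 𝒯(ᾱ) g(k) + ((1-𝒯(ᾱ))/K) ∑_j g(j)`. -/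
theorem gaussian_argmax_expectation (K : ℕ) (hK : 2 ≤ K) [NeZero K] (k : Fin K)
    (α : ℝ) (hα0 : 0 ≤ α) (hα1 : α < 1) (g : Fin K → ℝ) :
    ∫ w, g (argmaxIdx w)
        ∂(Measure.pi fun j : Fin K =>
            gaussianReal (if j = k then α else 0) (Real.toNNReal (1 - α ^ 2)))
      = diffTransform K α * g k + ((1 - diffTransform K α) / (K : ℝ)) * ∑ j, g j := by
  obtain ⟨n, rfl⟩ : ∃ n, K = n + 1 := ⟨K - 1, (Nat.succ_pred_eq_of_pos (by omega)).symm⟩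
  have hn : 1 ≤ n := by omega
  have h1α : (0:ℝ) < 1 - α ^ 2 := by nlinarith
  have hσ : 0 < Real.sqrt (1 - α ^ 2) := Real.sqrt_pos.mpr h1α
  have hσ2 : Real.sqrt (1 - α ^ 2) ^ 2 = 1 - α ^ 2 := Real.sq_sqrt h1α.le
  have hvne : Real.toNNReal (1 - α ^ 2) ≠ 0 := by
    simp only [ne_eq, Real.toNNReal_eq_zero, not_le]
    exact h1α
  set μm : Fin (n + 1) → Measure ℝ :=
    fun j => gaussianReal (if j = k then α else 0) (Real.toNNReal (1 - α ^ 2)) with hμm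
  haveI hPM : ∀ i, IsProbabilityMeasure (μm i) := fun i =>
    inferInstanceAs (IsProbabilityMeasure (gaussianReal _ _))
  set μ : Measure (Fin (n + 1) → ℝ) := Measure.pi μm with hμ
  haveI : IsProbabilityMeasure μ := by rw [hμ]; infer_instance
  set A : Fin (n + 1) → Set (Fin (n + 1) → ℝ) := fun j => {w | argmaxIdx w = j} with hA
  set B : Fin (n + 1) → Set (Fin (n + 1) → ℝ) :=
    fun j => {w | ∀ i, i ≠ j → w i < w j} with hB
  have hAmeas : ∀ j, MeasurableSet (A j) := fun j => measurableSet_argmax j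
  -- a.e. there are no ties
  have hae : ∀ᵐ w ∂μ, ∀ i i', i ≠ i' → w i ≠ w i' :=
    ties_null μm fun i => gaussianReal_absolutelyContinuous _ hvne
  have hAB : ∀ j, μ (A j) = μ (B j) := by
    intro j
    refine measure_congr (Filter.eventuallyEq_set.mpr ?_)
    filter_upwards [hae] with w hw
    exact argmaxIdx_eq_iff hw j
  -- the value of μ (B k)
  set I : ℝ := ∫ z : ℝ, stdGaussianPDF (z - α / Real.sqrt (1 - α ^ 2))
    * stdGaussianCDF z ^ n with hI
  have hBk : μ (B k) = ENNReal.ofReal I := by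
    rw [hμ, hB]
    rw [measure_lt_pivot μm k]
    have hcoord : ∀ j : Fin n, μm (k.succAbove j) = gaussianReal 0 (Real.toNNReal (1 - α ^ 2)) :=
      fun j => by rw [hμm]; simp [Fin.succAbove_ne k j]
    have hIio : ∀ t : ℝ, gaussianReal 0 (Real.toNNReal (1 - α ^ 2)) (Set.Iio t)
        = ENNReal.ofReal (stdGaussianCDF (t / Real.sqrt (1 - α ^ 2))) := by
      intro t
      have hv : Real.toNNReal (1 - α ^ 2)
          = (⟨Real.sqrt (1 - α ^ 2) ^ 2, sq_nonneg _⟩ : ℝ≥0) := by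
        ext; simp [Real.coe_toNNReal _ h1α.le, hσ2]; rfl
      rw [hv, gaussianReal_Iio_scaled hσ]
    have hμmk : μm k = gaussianReal α (Real.toNNReal (1 - α ^ 2)) := by
      rw [hμm]; simp
    calc (∫⁻ t, ∏ j : Fin n, μm (k.succAbove j) (Set.Iio t) ∂(μm k))
        = ∫⁻ t, ENNReal.ofReal (stdGaussianCDF (t / Real.sqrt (1 - α ^ 2)) ^ n)
            ∂(gaussianReal α (Real.toNNReal (1 - α ^ 2))) := by
          rw [hμmk]
          congr 1
          funext t
          simp only [hcoord, hIio]
          rw [Finset.prod_const, Finset.card_univ, Fintype.card_fin,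
            ← ENNReal.ofReal_pow (stdCDF_nonneg _)]
      _ = ENNReal.ofReal I := key_integral hσ hσ2 n
  have hInonneg : 0 ≤ I := by
    rw [hI]
    refine integral_nonneg fun z => mul_nonneg ?_ (pow_nonneg (stdCDF_nonneg _) n)
    rw [stdPDF_eq]; exact gaussianPDFReal_nonneg 0 1 _
  have hAk : (μ (A k)).toReal = I := by
    rw [hAB, hBk, ENNReal.toReal_ofReal hInonneg]
  -- symmetry among the other indices
  have hsym : ∀ j j', j ≠ k → j' ≠ k → μ (A j) = μ (A j') := by
    intro j j' hj hj'
    rw [hAB, hAB, hμ, hB]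
    refine measure_B_swap μm j j' fun i => ?_
    rw [hμm]
    rcases eq_or_ne i k with rfl | hik
    · rw [Equiv.swap_apply_of_ne_of_ne (Ne.symm hj) (Ne.symm hj')]
    · have : Equiv.swap j j' i ≠ k := by
        intro hc
        apply hik
        have := congrArg (Equiv.swap j j') hc
        rwa [Equiv.swap_apply_self, Equiv.swap_apply_of_ne_of_ne (Ne.symm hj) (Ne.symm hj')]
          at this
      simp [this, hik]
  -- the probabilities sum to 1
  have hsum : ∑ j, (μ (A j)).toReal = 1 := by
    have hdisj : Pairwise (Function.onFun Disjoint A) := by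
      intro i j hij
      simp only [Function.onFun, Set.disjoint_left]
      intro w hwi hwj
      exact hij (hwi.symm.trans hwj)
    have hunion : ⋃ j, A j = Set.univ := by
      ext w
      simp only [Set.mem_iUnion, Set.mem_univ, iff_true]
      exact ⟨argmaxIdx w, rfl⟩
    have h1 := measure_iUnion (μ := μ) hdisj hAmeas
    rw [hunion, measure_univ] at h1
    have h2 : ∑ j, μ (A j) = 1 := by rw [← tsum_fintype (L := SummationFilter.unconditional _)]; exact h1.symm
    rw [← ENNReal.toReal_sum fun j _ => measure_ne_top μ (A j), h2, ENNReal.toReal_one]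
  -- the common value for indices ≠ k
  have hq : ∀ j, j ≠ k → (μ (A j)).toReal = (1 - I) / n := by
    intro j hj
    have herase : ∑ x ∈ Finset.univ.erase k, (μ (A x)).toReal
        = n * (μ (A j)).toReal := by
      rw [Finset.sum_congr rfl fun x hx => by
        rw [hsym x j (Finset.mem_erase.mp hx).1 hj]]
      rw [Finset.sum_const, Finset.card_erase_of_mem (Finset.mem_univ k),
        Finset.card_univ, Fintype.card_fin]
      simp [nsmul_eq_mul]
    have htotal := hsum
    rw [← Finset.add_sum_erase _ (fun x => (μ (A x)).toReal) (Finset.mem_univ k),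
      herase, hAk] at htotal
    have hnne : (n:ℝ) ≠ 0 := by positivity
    field_simp
    linarith
  -- decompose the integral
  have hintegral : ∫ w, g (argmaxIdx w) ∂μ = ∑ j, (μ (A j)).toReal * g j := by
    have hrepr : ∀ w, g (argmaxIdx w) = ∑ j, Set.indicator (A j) (fun _ => g j) w := by
      intro w
      rw [Finset.sum_eq_single (argmaxIdx w)]
      · simp [hA, Set.indicator_of_mem, Set.mem_setOf_eq]
      · intro j _ hj
        apply Set.indicator_of_notMem
        simp only [hA, Set.mem_setOf_eq]
        exact fun hc => hj hc.symm
      · intro h; exact absurd (Finset.mem_univ _) h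
    simp_rw [hrepr]
    rw [integral_finset_sum _ fun j _ => (integrable_const (g j)).indicator (hAmeas j)]
    congr 1
    funext j
    rw [integral_indicator_const _ (hAmeas j)]
    simp [mul_comm, measureReal_def]
  rw [hintegral]
  -- final algebra
  have hT : diffTransform (n + 1) α = (((n:ℝ) + 1) / n) * (I - 1 / ((n:ℝ) + 1)) := by
    rw [diffTransform, hI]
    push_cast
    ring
  have hsplit : ∑ j, (μ (A j)).toReal * g j
      = I * g k + ((1 - I) / n) * (∑ j, g j - g k) := by
    rw [← Finset.add_sum_erase _ _ (Finset.mem_univ k), hAk]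
    congr 1
    rw [show ∑ j, g j - g k = ∑ x ∈ Finset.univ.erase k, g x by
      rw [← Finset.add_sum_erase _ g (Finset.mem_univ k)]; ring, Finset.mul_sum]
    exact Finset.sum_congr rfl fun x hx => by rw [hq x (Finset.mem_erase.mp hx).1]
  rw [hsplit, hT]
  have hnne : (n:ℝ) ≠ 0 := by positivity
  have hn1ne : (n:ℝ) + 1 ≠ 0 := by positivity
  push_cast
  field_simp
  ring
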